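/- Let N ≥ 1 and a, b ∈ ℂ \ {0} with |b| ≤ |a|, and let P_I be the N×N bidiagonal Toeplitz matrix. Then the numerical range of P_I, i.e. the set {⟨P_I u, u⟩ : u ∈ ℂ^N, ‖u‖ = 1}, is contained in the convex hull of the ellipse E₁ = {a e^{iξ} + b e^{-iξ} : ξ ∈ ℝ}; equivalently, for any c ∈ ℂ with c² = 4ab, it is contained in the filled ellipse {z ∈ ℂ : |z − c| + |z + c| ≤ 2(|a| + |b|)}. -/

import Mathlib

open Matrix
noncomputable section


private lemma par_law (x y : ℂ) :
    ‖x + y‖ ^ 2 + ‖x - y‖ ^ 2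
      = 2 * (‖x‖ ^ 2 + ‖y‖ ^ 2) := by
  simp only [Complex.sq_norm, Complex.normSq_apply, Complex.add_re, Complex.add_im,
    Complex.sub_re, Complex.sub_im]
  ring

private lemma key_ineq (a b c s : ℂ) (hc : c ^ 2 = 4 * a * b) (hs : ‖s‖ ≤ 1) :
    ‖a * s + b * (starRingEnd ℂ) s - c‖
      + ‖a * s + b * (starRingEnd ℂ) s + c‖
      ≤ 2 * (‖a‖ + ‖b‖) := by
  set t := (starRingEnd ℂ) s with ht
  set z := a * s + b * t with hz
  have hts : ‖t‖ = ‖s‖ := Complex.norm_conj s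
  have hs0 : 0 ≤ ‖s‖ := norm_nonneg s
  have hs2 : ‖s‖ ^ 2 ≤ 1 := by nlinarith
  have h3 : z ^ 2 - c ^ 2 = (a * s - b * t) ^ 2 + 4 * a * b * (s * t - 1) := by
    rw [hz, hc]; ring
  have habs_st : ‖s * t - 1‖ = 1 - ‖s‖ ^ 2 := by
    rw [ht, Complex.mul_conj]
    have h1 : ((Complex.normSq s : ℂ) - 1) = ((Complex.normSq s - 1 : ℝ) : ℂ) := by
      push_cast; ring
    rw [h1, Complex.norm_real, Real.norm_eq_abs, abs_of_nonpos, ← Complex.sq_norm]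
    · ring
    · rw [← Complex.sq_norm] at *; linarith
  have h4 : ‖z ^ 2 - c ^ 2‖
      ≤ ‖a * s - b * t‖ ^ 2
        + 4 * ‖a‖ * ‖b‖ * (1 - ‖s‖ ^ 2) := by
    rw [h3]
    calc ‖(a * s - b * t) ^ 2 + 4 * a * b * (s * t - 1)‖
        ≤ ‖(a * s - b * t) ^ 2‖ + ‖4 * a * b * (s * t - 1)‖ :=
          norm_add_le _ _
      _ = ‖a * s - b * t‖ ^ 2
          + 4 * ‖a‖ * ‖b‖ * (1 - ‖s‖ ^ 2) := by
          rw [norm_pow, norm_mul, norm_mul, norm_mul, habs_st]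
          simp
  have h5 : ‖z‖ ^ 2 + ‖a * s - b * t‖ ^ 2
      = 2 * (‖a‖ ^ 2 + ‖b‖ ^ 2) * ‖s‖ ^ 2 := by
    have := par_law (a * s) (b * t)
    rw [norm_mul, norm_mul, hts] at this
    rw [hz]
    nlinarith [this]
  have h6 : ‖c‖ ^ 2 = 4 * ‖a‖ * ‖b‖ := by
    have h1 : ‖c ^ 2‖ = ‖4 * a * b‖ := by rw [hc]
    rw [norm_pow, norm_mul, norm_mul] at h1
    simpa using h1
  have h1 : ‖z - c‖ ^ 2 + ‖z + c‖ ^ 2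
      = 2 * (‖z‖ ^ 2 + ‖c‖ ^ 2) := by
    have := par_law z c
    linarith
  have h2 : ‖z - c‖ * ‖z + c‖ = ‖z ^ 2 - c ^ 2‖ := by
    rw [← norm_mul]; ring_nf
  have hzc0 : 0 ≤ ‖z - c‖ := norm_nonneg _
  have hzc0' : 0 ≤ ‖z + c‖ := norm_nonneg _
  have ha0 : 0 ≤ ‖a‖ := norm_nonneg a
  have hb0 : 0 ≤ ‖b‖ := norm_nonneg b
  have hL2 : (‖z - c‖ + ‖z + c‖) ^ 2
      ≤ (2 * (‖a‖ + ‖b‖)) ^ 2 := by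
    nlinarith [mul_nonneg (sub_nonneg.2 hs2) (sq_nonneg (‖a‖ - ‖b‖))]
  nlinarith [hL2, hzc0, hzc0', ha0, hb0]


/-- The N×N bidiagonal Toeplitz matrix with `a` on the first superdiagonal and
`b` on the first subdiagonal. -/
def PIMatrix (N : ℕ) (a b : ℂ) : Matrix (Fin N) (Fin N) ℂ :=
  fun j k => if (j : ℕ) + 1 = (k : ℕ) then a else if (k : ℕ) + 1 = (j : ℕ) then b else 0

/-- The numerical range of `P_I` is contained in the convex hull of the ellipse
`E₁ = {a e^{iξ} + b e^{-iξ}}`, i.e. in the filled ellipse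
`{z : |z − c| + |z + c| ≤ 2(|a| + |b|)}` where `c² = 4ab`. -/
theorem numerical_range_PI_subset_filled_ellipse
    (N : ℕ) (hN : 1 ≤ N) (a b : ℂ) (ha : a ≠ 0) (hb : b ≠ 0)
    (hba : ‖b‖ ≤ ‖a‖)
    (c : ℂ) (hc : c ^ 2 = 4 * a * b)
    (u : Fin N → ℂ) (hu : ∑ i, ‖u i‖ ^ 2 = 1) :
    ‖(star u ⬝ᵥ (PIMatrix N a b *ᵥ u)) - c‖
      + ‖(star u ⬝ᵥ (PIMatrix N a b *ᵥ u)) + c‖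
      ≤ 2 * (‖a‖ + ‖b‖) := by
  classical
  set U : ℕ → ℂ := fun i => if h : i < N then u ⟨i, h⟩ else 0 with hUdef
  have hUj : ∀ j : Fin N, U (j : ℕ) = u j := fun j => dif_pos j.2
  have hUN : ∀ i, N ≤ i → U i = 0 := fun i hi => dif_neg (by omega)
  set s : ℂ := ∑ i ∈ Finset.range N, (starRingEnd ℂ) (U i) * U (i + 1) with hsdef
  have e1 : star u ⬝ᵥ (PIMatrix N a b *ᵥ u)
      = ∑ j ∈ Finset.range N, ∑ k ∈ Finset.range N,
          (starRingEnd ℂ) (U j) *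
            ((if j + 1 = k then a else if k + 1 = j then b else 0) * U k) := by
    rw [dotProduct]
    rw [← Fin.sum_univ_eq_sum_range (fun j => ∑ k ∈ Finset.range N,
      (starRingEnd ℂ) (U j) * ((if j + 1 = k then a else if k + 1 = j then b else 0) * U k)) N]
    refine Finset.sum_congr rfl fun j _ => ?_
    rw [mulVec, dotProduct]
    rw [← Fin.sum_univ_eq_sum_range (fun k =>
      (starRingEnd ℂ) (U (j : ℕ)) * ((if (j : ℕ) + 1 = k then a else if k + 1 = (j : ℕ) then b else 0) * U k)) N]
    rw [Finset.mul_sum]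
    refine Finset.sum_congr rfl fun k _ => ?_
    simp only [hUj, PIMatrix, Pi.star_apply, Complex.star_def]
    try ring
  have e2 : star u ⬝ᵥ (PIMatrix N a b *ᵥ u) = a * s + b * (starRingEnd ℂ) s := by
    rw [e1]
    have split : ∀ j k : ℕ,
        (starRingEnd ℂ) (U j) * ((if j + 1 = k then a else if k + 1 = j then b else 0) * U k)
        = (if k = j + 1 then a * ((starRingEnd ℂ) (U j) * U k) else 0)
          + (if j = k + 1 then b * ((starRingEnd ℂ) (U j) * U k) else 0) := by
      intro j k
      split_ifs <;> (try ring) <;> (exfalso; omega)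
    simp only [split, Finset.sum_add_distrib]
    have eA : (∑ j ∈ Finset.range N, ∑ k ∈ Finset.range N,
        if k = j + 1 then a * ((starRingEnd ℂ) (U j) * U k) else 0) = a * s := by
      rw [hsdef, Finset.mul_sum]
      refine Finset.sum_congr rfl fun j hj => ?_
      rw [Finset.sum_ite_eq' (Finset.range N) (j + 1)
        (fun k => a * ((starRingEnd ℂ) (U j) * U k))]
      by_cases h : j + 1 ∈ Finset.range N
      · rw [if_pos h]
      · rw [if_neg h, hUN (j + 1) (by simpa using h)]
        simp
    have eB : (∑ j ∈ Finset.range N, ∑ k ∈ Finset.range N,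
        if j = k + 1 then b * ((starRingEnd ℂ) (U j) * U k) else 0)
        = b * (starRingEnd ℂ) s := by
      rw [Finset.sum_comm, hsdef, map_sum, Finset.mul_sum]
      refine Finset.sum_congr rfl fun k hk => ?_
      have inner : (∑ j ∈ Finset.range N, if j = k + 1 then b * ((starRingEnd ℂ) (U j) * U k) else 0)
          = b * ((starRingEnd ℂ) (U (k + 1)) * U k) := by
        rw [Finset.sum_ite_eq' (Finset.range N) (k + 1)
          (fun j => b * ((starRingEnd ℂ) (U j) * U k))]
        by_cases h : k + 1 ∈ Finset.range N
        · rw [if_pos h]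
        · rw [if_neg h, hUN (k + 1) (by simpa using h)]
          simp
      rw [inner, _root_.map_mul, Complex.conj_conj]
      ring
    rw [eA, eB]
  have hu' : ∑ i ∈ Finset.range N, ‖U i‖ ^ 2 = 1 := by
    rw [← Fin.sum_univ_eq_sum_range (fun i => ‖U i‖ ^ 2) N]
    rw [← hu]
    exact Finset.sum_congr rfl fun j _ => by rw [hUj]
  have hB : ∑ i ∈ Finset.range N, ‖U (i + 1)‖ ^ 2 ≤ 1 := by
    have h1 : ∑ i ∈ Finset.range (N + 1), ‖U i‖ ^ 2
        = (∑ i ∈ Finset.range N, ‖U (i + 1)‖ ^ 2) + ‖U 0‖ ^ 2 :=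
      Finset.sum_range_succ' (fun i => ‖U i‖ ^ 2) N
    rw [Finset.sum_range_succ, hu', hUN N le_rfl] at h1
    simp at h1
    nlinarith [sq_nonneg (‖U 0‖)]
  have hs1 : ‖s‖ ≤ 1 := by
    have h1 : ‖s‖ ≤ ∑ i ∈ Finset.range N,
        ‖(starRingEnd ℂ) (U i) * U (i + 1)‖ := by
      rw [hsdef]
      exact norm_sum_le _ _
    have h2 : ∑ i ∈ Finset.range N, ‖(starRingEnd ℂ) (U i) * U (i + 1)‖
        ≤ ∑ i ∈ Finset.range N,
            (‖U i‖ ^ 2 + ‖U (i + 1)‖ ^ 2) / 2 := by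
      refine Finset.sum_le_sum fun i _ => ?_
      rw [norm_mul, Complex.norm_conj]
      nlinarith [sq_nonneg (‖U i‖ - ‖U (i + 1)‖)]
    have h3 : ∑ i ∈ Finset.range N,
        (‖U i‖ ^ 2 + ‖U (i + 1)‖ ^ 2) / 2
        = (∑ i ∈ Finset.range N, ‖U i‖ ^ 2) / 2
          + (∑ i ∈ Finset.range N, ‖U (i + 1)‖ ^ 2) / 2 := by
      rw [← Finset.sum_div, Finset.sum_add_distrib, add_div]
    rw [h3, hu'] at h2
    linarith
  rw [e2]
  exact key_ineq a b c s hc hs1
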